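/- Let $r \geq 3$ be odd and $q = e^{2\pi i/r}$. Then the quantum factorial $[N]!$ is a nonzero real number for all integers $0 \leq N \leq r-1$; it is positive for $0 \leq N \leq (r-1)/2$, and for every integer $N$ with $(r-1)/2 \leq N \leq r-1$ its sign is $(-1)^{N - (r-1)/2}$, i.e. $(-1)^{N-(r-1)/2}\,[N]! > 0$. -/
import Mathlib


open scoped Real
open Complex Finset

noncomputable section

/-- The quantum integer `[n]` at `q = exp(2πi/r)`. -/
def qint (r : ℕ) (n : ℤ) : ℂ :=
  (Complex.exp (2 * Real.pi * Complex.I / r) ^ n -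
    Complex.exp (2 * Real.pi * Complex.I / r) ^ (-n)) /
  (Complex.exp (2 * Real.pi * Complex.I / r) -
    (Complex.exp (2 * Real.pi * Complex.I / r))⁻¹)

/-- The quantum factorial `[N]! = ∏_{k=1}^N [k]`, with `[0]! = 1`. -/
def qfact (r N : ℕ) : ℂ := ∏ k ∈ Finset.Icc 1 N, qint r (k : ℤ)

/-- A triple `(a₁,a₂,a₃)` of elements of `I_r = {0,…,r-2}` is `r`-admissible. -/
def AdmissibleTriple (r a₁ a₂ a₃ : ℕ) : Prop :=
  a₁ ≤ r - 2 ∧ a₂ ≤ r - 2 ∧ a₃ ≤ r - 2 ∧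
  Even (a₁ + a₂ + a₃) ∧
  a₁ + a₂ + a₃ ≤ 2 * (r - 2) ∧
  a₃ ≤ a₁ + a₂ ∧ a₂ ≤ a₁ + a₃ ∧ a₁ ≤ a₂ + a₃

/-- A 6-tuple `(a₁,…,a₆)` is `r`-admissible. -/
def Admissible6 (r a₁ a₂ a₃ a₄ a₅ a₆ : ℕ) : Prop :=
  AdmissibleTriple r a₁ a₂ a₃ ∧ AdmissibleTriple r a₁ a₅ a₆ ∧
  AdmissibleTriple r a₂ a₄ a₆ ∧ AdmissibleTriple r a₃ a₄ a₅

/-- `Δ(a₁,a₂,a₃)`, using the principal complex square root, which realizes the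
convention `√y = i√|y|` for negative real `y`. -/
def qdelta (r a₁ a₂ a₃ : ℕ) : ℂ :=
  (qfact r ((a₁ + a₂ - a₃) / 2) * qfact r ((a₁ + a₃ - a₂) / 2) *
      qfact r ((a₂ + a₃ - a₁) / 2) / qfact r ((a₁ + a₂ + a₃) / 2 + 1)) ^ (1 / 2 : ℂ)

/-- The quantum 6j-symbol `|a₁ a₂ a₃; a₄ a₅ a₆|` at `q = exp(2πi/r)`. -/
def sixj (r a₁ a₂ a₃ a₄ a₅ a₆ : ℕ) : ℂ :=
  Complex.I ^ (-(a₁ + a₂ + a₃ + a₄ + a₅ + a₆ : ℤ)) *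
    qdelta r a₁ a₂ a₃ * qdelta r a₁ a₅ a₆ * qdelta r a₂ a₄ a₆ * qdelta r a₃ a₄ a₅ *
    ∑ k ∈ Finset.Icc
        (max (max ((a₁ + a₂ + a₃) / 2) ((a₁ + a₅ + a₆) / 2))
             (max ((a₂ + a₄ + a₆) / 2) ((a₃ + a₄ + a₅) / 2)))
        (min ((a₁ + a₂ + a₄ + a₅) / 2)
             (min ((a₁ + a₃ + a₄ + a₆) / 2) ((a₂ + a₃ + a₅ + a₆) / 2))),
      ((-1 : ℂ) ^ k * qfact r (k + 1)) /
        (qfact r (k - (a₁ + a₂ + a₃) / 2) * qfact r (k - (a₁ + a₅ + a₆) / 2) *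
         qfact r (k - (a₂ + a₄ + a₆) / 2) * qfact r (k - (a₃ + a₄ + a₅) / 2) *
         qfact r ((a₁ + a₂ + a₄ + a₅) / 2 - k) * qfact r ((a₁ + a₃ + a₄ + a₆) / 2 - k) *
         qfact r ((a₂ + a₃ + a₅ + a₆) / 2 - k))

/-- `n_r = (r-1)/2` if `r ≡ 1 mod 4`, and `n_r = (r-3)/2` if `r ≡ 3 mod 4`. -/
def nr (r : ℕ) : ℕ := if r % 4 = 1 then (r - 1) / 2 else (r - 3) / 2

/-- The real value of the quantum integer. -/
def rq (r k : ℕ) : ℝ := Real.sin (2 * Real.pi * k / r) / Real.sin (2 * Real.pi / r)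

/-- The real value of the quantum factorial. -/
def rqf (r N : ℕ) : ℝ := ∏ k ∈ Finset.Icc 1 N, rq r k

lemma exp_mul_I_sub (x : ℝ) :
    Complex.exp ((x : ℂ) * Complex.I) - Complex.exp (-((x : ℂ) * Complex.I)) =
      2 * Complex.I * (Real.sin x : ℂ) := by
  rw [Complex.exp_mul_I, ← neg_mul, Complex.exp_mul_I, Complex.cos_neg, Complex.sin_neg,
    Complex.ofReal_sin]
  ring

lemma qint_eq (r : ℕ) (k : ℕ) : qint r (k : ℤ) = ((rq r k : ℝ) : ℂ) := by
  have hc : (2 * (Real.pi : ℂ) * Complex.I / r) = ((2 * Real.pi / r : ℝ) : ℂ) * Complex.I := by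
    push_cast; ring
  have e1 : Complex.exp (((2 * Real.pi / r : ℝ) : ℂ) * Complex.I) ^ (k : ℤ) =
      Complex.exp (((2 * Real.pi * k / r : ℝ) : ℂ) * Complex.I) := by
    rw [← Complex.exp_int_mul]; congr 1; push_cast; ring
  have e2 : Complex.exp (((2 * Real.pi / r : ℝ) : ℂ) * Complex.I) ^ (-(k : ℤ)) =
      Complex.exp (-(((2 * Real.pi * k / r : ℝ) : ℂ) * Complex.I)) := by
    rw [← Complex.exp_int_mul]; congr 1; push_cast; ring
  have e3 : (Complex.exp (((2 * Real.pi / r : ℝ) : ℂ) * Complex.I))⁻¹ =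
      Complex.exp (-(((2 * Real.pi / r : ℝ) : ℂ) * Complex.I)) := (Complex.exp_neg _).symm
  rw [qint, hc, e1, e2, e3, exp_mul_I_sub, exp_mul_I_sub,
    mul_div_mul_left _ _ (by simp [Complex.I_ne_zero] : (2 : ℂ) * Complex.I ≠ 0), rq,
    Complex.ofReal_div]

lemma qfact_eq (r N : ℕ) : qfact r N = ((rqf r N : ℝ) : ℂ) := by
  rw [qfact, rqf, Complex.ofReal_prod]
  exact Finset.prod_congr rfl fun k _ => qint_eq r k

lemma rq_pos (r : ℕ) (hr : 3 ≤ r) (hodd : Odd r) {k : ℕ} (hk1 : 1 ≤ k)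
    (hk2 : k ≤ (r - 1) / 2) : 0 < rq r k := by
  obtain ⟨t, ht⟩ := hodd
  have hr0 : (0 : ℝ) < r := by positivity
  have hr3 : (3 : ℝ) ≤ r := by exact_mod_cast hr
  have h2k : 2 * k < r := by omega
  have h2kr : 2 * (k : ℝ) < r := by exact_mod_cast h2k
  have hden : 0 < Real.sin (2 * Real.pi / r) := by
    apply Real.sin_pos_of_pos_of_lt_pi
    · positivity
    · rw [div_lt_iff₀ hr0]
      nlinarith [Real.pi_pos]
  have hnum : 0 < Real.sin (2 * Real.pi * k / r) := by
    apply Real.sin_pos_of_pos_of_lt_pi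
    · have : (0:ℝ) < (k:ℝ) := by exact_mod_cast hk1
      positivity
    · rw [div_lt_iff₀ hr0]
      nlinarith [Real.pi_pos]
  exact div_pos hnum hden

lemma rq_neg (r : ℕ) (hr : 3 ≤ r) (hodd : Odd r) {k : ℕ} (hk1 : (r - 1) / 2 < k)
    (hk2 : k ≤ r - 1) : rq r k < 0 := by
  obtain ⟨t, ht⟩ := hodd
  have hr0 : (0 : ℝ) < r := by positivity
  have hr3 : (3 : ℝ) ≤ r := by exact_mod_cast hr
  have hden : 0 < Real.sin (2 * Real.pi / r) := by
    apply Real.sin_pos_of_pos_of_lt_pi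
    · positivity
    · rw [div_lt_iff₀ hr0]
      nlinarith [Real.pi_pos]
  have h2k : r < 2 * k := by omega
  have hkr : k < r := by omega
  have h2kr : (r : ℝ) < 2 * k := by exact_mod_cast h2k
  have hkrr : (k : ℝ) < r := by exact_mod_cast hkr
  have hnum : Real.sin (2 * Real.pi * k / r) < 0 := by
    have hx : 2 * Real.pi * k / r = (2 * Real.pi * k / r - 2 * Real.pi) + 2 * Real.pi := by ring
    rw [hx, Real.sin_add_two_pi]
    apply Real.sin_neg_of_neg_of_neg_pi_lt
    · rw [sub_neg, div_lt_iff₀ hr0]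
      nlinarith [Real.pi_pos]
    · have hgt : Real.pi < 2 * Real.pi * k / r := by
        rw [lt_div_iff₀ hr0]; nlinarith [Real.pi_pos]
      linarith
  exact div_neg_of_neg_of_pos hnum hden

lemma rqf_pos (r : ℕ) (hr : 3 ≤ r) (hodd : Odd r) {N : ℕ} (hN : N ≤ (r - 1) / 2) :
    0 < rqf r N := by
  apply Finset.prod_pos
  intro k hk
  rw [Finset.mem_Icc] at hk
  exact rq_pos r hr hodd hk.1 (hk.2.trans hN)

lemma rqf_sign (r : ℕ) (hr : 3 ≤ r) (hodd : Odd r) :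
    ∀ N : ℕ, (r - 1) / 2 ≤ N → N ≤ r - 1 → 0 < (-1 : ℝ) ^ (N - (r - 1) / 2) * rqf r N := by
  intro N hmN
  induction N, hmN using Nat.le_induction with
  | base =>
    intro hN
    simpa using rqf_pos r hr hodd le_rfl
  | succ N hmN ih =>
    intro hN
    have hN' : N ≤ r - 1 := by omega
    have h := ih hN'
    have hstep : rqf r (N + 1) = rqf r N * rq r (N + 1) := by
      rw [rqf, rqf, Finset.prod_Icc_succ_top (by omega : 1 ≤ N + 1)]
    have hneg : rq r (N + 1) < 0 := rq_neg r hr hodd (by omega) hN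
    have hpow : (N + 1 - (r - 1) / 2) = (N - (r - 1) / 2) + 1 := by omega
    rw [hstep, hpow, pow_succ]
    nlinarith

theorem qfact_real_and_signs (r : ℕ) (hr : 3 ≤ r) (hodd : Odd r) :
    (∀ N : ℕ, N ≤ r - 1 → (qfact r N).im = 0 ∧ qfact r N ≠ 0) ∧
    (∀ N : ℕ, N ≤ (r - 1) / 2 → 0 < (qfact r N).re) ∧
    (∀ N : ℕ, (r - 1) / 2 ≤ N → N ≤ r - 1 →
      0 < (-1 : ℝ) ^ (N - (r - 1) / 2) * (qfact r N).re) := by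
  refine ⟨?_, ?_, ?_⟩
  · intro N hN
    rw [qfact_eq]
    refine ⟨by simp, ?_⟩
    have hF : rqf r N ≠ 0 := by
      rcases le_or_gt N ((r - 1) / 2) with h | h
      · exact (rqf_pos r hr hodd h).ne'
      · intro h0
        have := rqf_sign r hr hodd N h.le hN
        rw [h0, mul_zero] at this
        exact lt_irrefl 0 this
    simpa using hF
  · intro N hN
    rw [qfact_eq]
    simpa using rqf_pos r hr hodd hN
  · intro N h1 h2
    have := rqf_sign r hr hodd N h1 h2
    rw [qfact_eq]
    simpa using this
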